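/- The smooth distribution 𝒟 on ℝ² given by 𝒟_{(x,y)} = T_{(x,y)}ℝ² for x > 0 and 𝒟_{(x,y)} = span(∂/∂x) for x ≤ 0 is involutive but not integrable: there is no partition of ℝ² into immersed connected submanifolds whose tangent spaces equal 𝒟 at every point. -/

import Mathlib

/-- The smooth singular distribution on `ℝ²`: the full tangent plane for `x > 0`, the
line spanned by `∂/∂x` for `x ≤ 0`. -/
noncomputable def D16 : ℝ × ℝ → Submodule ℝ (ℝ × ℝ) := fun p =>
  if 0 < p.1 then ⊤ else Submodule.span ℝ {((1 : ℝ), (0 : ℝ))}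

/-- The Lie bracket of vector fields on `ℝ²` (viewed as smooth maps `ℝ² → ℝ²`). -/
noncomputable def vbracket16 (X Y : (ℝ × ℝ) → (ℝ × ℝ)) : (ℝ × ℝ) → (ℝ × ℝ) :=
  fun p => fderiv ℝ Y p (X p) - fderiv ℝ X p (Y p)

/-- The tangent set of a subset `L ⊆ ℝ²` at a point `p`: the velocities at `p` of smooth
curves through `p` staying in `L` near time `0`.  For an immersed submanifold this is the
tangent space. -/
def tangentSet16 (L : Set (ℝ × ℝ)) (p : ℝ × ℝ) : Set (ℝ × ℝ) :=
  {v | ∃ γ : ℝ → ℝ × ℝ, ContDiff ℝ (⊤ : ℕ∞) γ ∧ γ 0 = p ∧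
    (∀ᶠ t in nhds (0 : ℝ), γ t ∈ L) ∧ deriv γ 0 = v}

open Set Metric Filter

lemma mem_span10 {v : ℝ × ℝ} : v ∈ Submodule.span ℝ {((1 : ℝ), (0 : ℝ))} ↔ v.2 = 0 := by
  rw [Submodule.mem_span_singleton]
  constructor
  · rintro ⟨a, rfl⟩; simp
  · intro h; exact ⟨v.1, by ext <;> simp [h]⟩

lemma D16_snd {p v : ℝ × ℝ} (hp : p.1 ≤ 0) (hv : v ∈ D16 p) : v.2 = 0 := by
  rw [D16, if_neg (not_lt.2 hp)] at hv
  exact mem_span10.1 hv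

/-- key lemma: if Z is smooth and valued in D16, then at a point q with q.1 ≤ 0,
the derivative of Z in the direction (1,0) has vanishing second component. -/
lemma key16 {Z : ℝ × ℝ → ℝ × ℝ} (hZ : ContDiff ℝ (⊤ : ℕ∞) Z)
    (hZD : ∀ p, Z p ∈ D16 p) {q : ℝ × ℝ} (hq : q.1 ≤ 0) :
    (fderiv ℝ Z q ((1 : ℝ), (0 : ℝ))).2 = 0 := by
  have hdiff : DifferentiableAt ℝ Z q := (hZ.differentiable (by simp)) q
  -- the curve x ↦ (x, q.2)
  have hg : HasDerivAt (fun x : ℝ => ((x, q.2) : ℝ × ℝ)) ((1 : ℝ), (0 : ℝ)) q.1 :=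
    (hasDerivAt_id q.1).prodMk (hasDerivAt_const _ _)
  have hZq : HasFDerivAt Z (fderiv ℝ Z q) ((q.1, q.2)) := by
    simpa using hdiff.hasFDerivAt
  have h1 : HasDerivAt (fun x : ℝ => Z (x, q.2)) (fderiv ℝ Z q ((1 : ℝ), (0 : ℝ))) q.1 :=
    hZq.comp_hasDerivAt q.1 hg
  have h2 : HasDerivAt (fun x : ℝ => (Z (x, q.2)).2)
      ((fderiv ℝ Z q ((1 : ℝ), (0 : ℝ))).2) q.1 := by
    have := (ContinuousLinearMap.snd ℝ ℝ ℝ).hasFDerivAt.comp_hasDerivAt q.1 h1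
    exact this
  -- the function vanishes on Iic 0
  have hzero : ∀ x ∈ Set.Iic (0 : ℝ), (Z (x, q.2)).2 = 0 := fun x hx =>
    D16_snd (by exact hx) (hZD (x, q.2))
  have hW0 : HasDerivWithinAt (fun x : ℝ => (Z (x, q.2)).2) 0 (Set.Iic 0) q.1 := by
    have hc : HasDerivWithinAt (fun _ : ℝ => (0 : ℝ)) 0 (Set.Iic 0) q.1 :=
      (hasDerivAt_const _ _).hasDerivWithinAt
    exact hc.congr (fun x hx => hzero x hx) (hzero q.1 hq)
  have hW1 : HasDerivWithinAt (fun x : ℝ => (Z (x, q.2)).2)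
      ((fderiv ℝ Z q ((1 : ℝ), (0 : ℝ))).2) (Set.Iic 0) q.1 := h2.hasDerivWithinAt
  have hu : UniqueDiffWithinAt ℝ (Set.Iic (0 : ℝ)) q.1 := uniqueDiffOn_Iic 0 q.1 hq
  have := hW1.derivWithin hu
  rw [hW0.derivWithin hu] at this
  exact this.symm

lemma key16' {Z : ℝ × ℝ → ℝ × ℝ} (hZ : ContDiff ℝ (⊤ : ℕ∞) Z)
    (hZD : ∀ p, Z p ∈ D16 p) {q v : ℝ × ℝ} (hq : q.1 ≤ 0) (hv : v.2 = 0) :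
    (fderiv ℝ Z q v).2 = 0 := by
  have hv' : v = v.1 • ((1 : ℝ), (0 : ℝ)) := by ext <;> simp [hv]
  rw [hv', map_smul]
  simp [key16 hZ hZD hq]

lemma part1_16 : ∀ X Y : ℝ × ℝ → ℝ × ℝ, ContDiff ℝ (⊤ : ℕ∞) X → ContDiff ℝ (⊤ : ℕ∞) Y →
    (∀ p, X p ∈ D16 p) → (∀ p, Y p ∈ D16 p) →
    ∀ p, vbracket16 X Y p ∈ D16 p := by
  intro X Y hX hY hXD hYD p
  unfold vbracket16
  by_cases hp : 0 < p.1
  · simp [D16, hp]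
  · have hp' : p.1 ≤ 0 := not_lt.1 hp
    rw [D16, if_neg hp]
    refine mem_span10.2 ?_
    have h1 : (fderiv ℝ Y p (X p)).2 = 0 :=
      key16' hY hYD hp' (D16_snd hp' (hXD p))
    have h2 : (fderiv ℝ X p (Y p)).2 = 0 :=
      key16' hX hXD hp' (D16_snd hp' (hYD p))
    simp [Prod.sub_def] at *
    simp [h1, h2]

noncomputable def clamp16 (L s : ℝ) : ℝ := max (-L) (min L s)

lemma clamp16_mem {L s : ℝ} (hL : 0 < L) : |clamp16 L s| ≤ L := by
  rw [abs_le]; constructor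
  · exact le_max_left _ _
  · exact max_le (by linarith) (min_le_left _ _)

lemma clamp16_lip (L : ℝ) (s t : ℝ) : |clamp16 L s - clamp16 L t| ≤ |s - t| := by
  have h1 : |max (-L) (min L s) - max (-L) (min L t)| ≤ |min L s - min L t| := by
    rw [max_comm (-L) _, max_comm (-L) _]
    exact abs_max_sub_max_le_abs _ _ _
  have h2 : |min L s - min L t| ≤ |s - t| := by
    have := abs_min_sub_min_le_max L s L t
    simpa using this
  exact h1.trans h2

lemma clamp16_of_le {L s : ℝ} (h : |s| ≤ L) : clamp16 L s = s := by
  rw [abs_le] at h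
  rw [clamp16, min_eq_right h.2, max_eq_right h.1]

lemma clamp16_zero {L : ℝ} (hL : 0 < L) : clamp16 L 0 = 0 :=
  clamp16_of_le (by simpa using hL.le)

/-- The crossing lemma: two cone-controlled curves, one near-vertical and one
near-horizontal, based at nearby points, must intersect. -/
lemma cross16 {γ β : ℝ → ℝ × ℝ} {q z : ℝ × ℝ} {L₁ L₂ : ℝ}
    (hL₁ : 0 < L₁) (hL₂ : 0 < L₂)
    (hγd : Differentiable ℝ γ) (hβd : Differentiable ℝ β)
    (hγ0 : γ 0 = q) (hβ0 : β 0 = z)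
    (hγ : ∀ s : ℝ, |s| ≤ L₁ → ‖deriv γ s - ((0:ℝ),(1:ℝ))‖ ≤ 1/10)
    (hβ : ∀ t : ℝ, |t| ≤ L₂ → ‖deriv β t - ((1:ℝ),(0:ℝ))‖ ≤ 1/10)
    (hqz : dist q z ≤ min L₁ L₂ / 2) :
    ∃ s t : ℝ, |s| ≤ L₁ ∧ |t| ≤ L₂ ∧ γ s = β t := by
  set v₁ : ℝ × ℝ := ((0:ℝ),(1:ℝ)) with hv₁
  set v₂ : ℝ × ℝ := ((1:ℝ),(0:ℝ)) with hv₂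
  -- the two "drift" functions
  set φ : ℝ → ℝ × ℝ := fun s => γ (clamp16 L₁ s) - (clamp16 L₁ s) • v₁ with hφ
  set ψ : ℝ → ℝ × ℝ := fun t => β (clamp16 L₂ t) - (clamp16 L₂ t) • v₂ with hψ
  -- Lipschitz bound for the core functions on the interval
  have key : ∀ (δ : ℝ → ℝ × ℝ) (v : ℝ × ℝ) (L : ℝ), (0 < L) → Differentiable ℝ δ →
      (∀ s : ℝ, |s| ≤ L → ‖deriv δ s - v‖ ≤ 1/10) →
      ∀ s t : ℝ, ‖(δ (clamp16 L s) - (clamp16 L s) • v) - (δ (clamp16 L t) - (clamp16 L t) • v)‖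
        ≤ (1/10) * |s - t| := by
    intro δ v L hL hδd hδ s t
    have hder : ∀ u ∈ Icc (-L) L, deriv (fun u => δ u - u • v) u = deriv δ u - v := by
      intro u _
      rw [deriv_fun_sub (hδd u) (by exact (differentiable_id.smul_const v) u)]
      congr 1
      simpa using deriv_smul_const (differentiable_id (𝕜 := ℝ) u) v
    have hd : ∀ u ∈ Icc (-L) L, DifferentiableAt ℝ (fun u => δ u - u • v) u := by
      intro u _
      exact ((hδd u).sub ((differentiable_id.smul_const v) u))
    have hC : ∀ u ∈ Icc (-L) L, ‖deriv (fun u => δ u - u • v) u‖ ≤ 1/10 := by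
      intro u hu
      rw [hder u hu]
      exact hδ u (abs_le.2 ⟨hu.1, hu.2⟩)
    have hmem : ∀ s : ℝ, clamp16 L s ∈ Icc (-L) L := by
      intro s
      have := clamp16_mem (s := s) hL
      rw [abs_le] at this
      exact ⟨this.1, this.2⟩
    have := Convex.norm_image_sub_le_of_norm_deriv_le (f := fun u => δ u - u • v)
      hd hC (convex_Icc _ _) (hmem t) (hmem s)
    calc ‖_ - _‖ ≤ (1/10) * ‖clamp16 L s - clamp16 L t‖ := this
      _ ≤ (1/10) * |s - t| := by
          have := clamp16_lip L s t
          rw [Real.norm_eq_abs]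
          nlinarith [abs_nonneg (s - t)]
  have hφlip := key γ v₁ L₁ hL₁ hγd hγ
  have hψlip := key β v₂ L₂ hL₂ hβd hβ
  -- T: contraction whose fixed points are crossings
  set T : ℝ × ℝ → ℝ × ℝ := fun p => ((ψ p.2).2 - (φ p.1).2, (φ p.1).1 - (ψ p.2).1) with hT
  have hTlip : LipschitzWith (1/5 : NNReal) T := by
    apply LipschitzWith.of_dist_le_mul
    intro p p'
    have h1 : ‖φ p.1 - φ p'.1‖ ≤ (1/10) * |p.1 - p'.1| := hφlip p.1 p'.1
    have h2 : ‖ψ p.2 - ψ p'.2‖ ≤ (1/10) * |p.2 - p'.2| := hψlip p.2 p'.2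
    have h1a : |(φ p.1).1 - (φ p'.1).1| ≤ (1/10) * |p.1 - p'.1| :=
      le_trans (by simpa using (norm_fst_le (φ p.1 - φ p'.1))) h1
    have h1b : |(φ p.1).2 - (φ p'.1).2| ≤ (1/10) * |p.1 - p'.1| :=
      le_trans (by simpa using (norm_snd_le (φ p.1 - φ p'.1))) h1
    have h2a : |(ψ p.2).1 - (ψ p'.2).1| ≤ (1/10) * |p.2 - p'.2| :=
      le_trans (by simpa using (norm_fst_le (ψ p.2 - ψ p'.2))) h2
    have h2b : |(ψ p.2).2 - (ψ p'.2).2| ≤ (1/10) * |p.2 - p'.2| :=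
      le_trans (by simpa using (norm_snd_le (ψ p.2 - ψ p'.2))) h2
    have hd : dist p p' = max (dist p.1 p'.1) (dist p.2 p'.2) := Prod.dist_eq
    have hd1 : |p.1 - p'.1| ≤ dist p p' := by
      rw [hd]; rw [Real.dist_eq, Real.dist_eq]; exact le_max_left _ _
    have hd2 : |p.2 - p'.2| ≤ dist p p' := by
      rw [hd]; rw [Real.dist_eq, Real.dist_eq]; exact le_max_right _ _
    rw [Prod.dist_eq]
    have e1 : dist (T p).1 (T p').1 ≤ (1/5 : ℝ) * dist p p' := by
      simp only [hT, Real.dist_eq]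
      have : ((ψ p.2).2 - (φ p.1).2) - ((ψ p'.2).2 - (φ p'.1).2)
           = ((ψ p.2).2 - (ψ p'.2).2) - ((φ p.1).2 - (φ p'.1).2) := by ring
      rw [this]
      calc |_ - _| ≤ |(ψ p.2).2 - (ψ p'.2).2| + |(φ p.1).2 - (φ p'.1).2| := abs_sub _ _
        _ ≤ (1/10) * |p.2 - p'.2| + (1/10) * |p.1 - p'.1| := add_le_add h2b h1b
        _ ≤ (1/5 : ℝ) * dist p p' := by nlinarith
    have e2 : dist (T p).2 (T p').2 ≤ (1/5 : ℝ) * dist p p' := by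
      simp only [hT, Real.dist_eq]
      have : ((φ p.1).1 - (ψ p.2).1) - ((φ p'.1).1 - (ψ p'.2).1)
           = ((φ p.1).1 - (φ p'.1).1) - ((ψ p.2).1 - (ψ p'.2).1) := by ring
      rw [this]
      calc |_ - _| ≤ |(φ p.1).1 - (φ p'.1).1| + |(ψ p.2).1 - (ψ p'.2).1| := abs_sub _ _
        _ ≤ (1/10) * |p.1 - p'.1| + (1/10) * |p.2 - p'.2| := add_le_add h1a h2a
        _ ≤ (1/5 : ℝ) * dist p p' := by nlinarith
    have : (((1:NNReal)/5 : NNReal) : ℝ) = (1/5 : ℝ) := by norm_num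
    rw [max_le_iff]
    constructor
    · calc dist (T p).1 (T p').1 ≤ (1/5:ℝ) * dist p p' := e1
        _ = ((1/5 : NNReal) : ℝ) * dist p p' := by norm_num
    · calc dist (T p).2 (T p').2 ≤ (1/5:ℝ) * dist p p' := e2
        _ = ((1/5 : NNReal) : ℝ) * dist p p' := by norm_num
  have hcontr : ContractingWith (1/5 : NNReal) T := by
    refine ⟨?_, hTlip⟩
    rw [← NNReal.coe_lt_coe]
    norm_num
  obtain ⟨y, hy, -, -⟩ := hcontr.exists_fixedPoint ((0:ℝ),(0:ℝ)) (by simp [edist_ne_top])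
  -- bound the fixed point
  have hT0 : T ((0:ℝ),(0:ℝ)) = (z.2 - q.2, q.1 - z.1) := by
    simp only [hT, hφ, hψ]
    rw [clamp16_zero hL₁, clamp16_zero hL₂]
    simp [hγ0, hβ0]
  have hb : dist y ((0:ℝ),(0:ℝ)) ≤ (5/4 : ℝ) * dist q z := by
    have h1 : dist y (T ((0:ℝ),(0:ℝ))) ≤ (1/5:ℝ) * dist y ((0:ℝ),(0:ℝ)) := by
      calc dist y (T ((0:ℝ),(0:ℝ))) = dist (T y) (T ((0:ℝ),(0:ℝ))) := by rw [hy.eq]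
        _ ≤ ((1/5:NNReal):ℝ) * dist y ((0:ℝ),(0:ℝ)) := hTlip.dist_le_mul _ _
        _ = (1/5:ℝ) * dist y ((0:ℝ),(0:ℝ)) := by norm_num
    have h2 : dist (T ((0:ℝ),(0:ℝ))) ((0:ℝ),(0:ℝ)) ≤ dist q z := by
      rw [hT0, Prod.dist_eq, Prod.dist_eq (x := q) (y := z)]
      simp only [Real.dist_eq, sub_zero]
      apply max_le
      · rw [abs_sub_comm]
        exact le_max_right _ _
      · exact le_max_left _ _
    have h3 := dist_triangle y (T ((0:ℝ),(0:ℝ))) ((0:ℝ),(0:ℝ))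
    linarith
  -- extract the crossing
  have hy1 : |y.1| ≤ L₁ := by
    have h1 : |y.1| ≤ dist y ((0:ℝ),(0:ℝ)) := by
      rw [Prod.dist_eq]
      simpa [Real.dist_eq] using le_max_left |y.1 - 0| |y.2 - 0|
    have h4 : min L₁ L₂ ≤ L₁ := min_le_left _ _
    nlinarith [dist_nonneg (x := q) (y := z)]
  have hy2 : |y.2| ≤ L₂ := by
    have h1 : |y.2| ≤ dist y ((0:ℝ),(0:ℝ)) := by
      rw [Prod.dist_eq]
      simpa [Real.dist_eq] using le_max_right |y.1 - 0| |y.2 - 0|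
    have h4 : min L₁ L₂ ≤ L₂ := min_le_right _ _
    nlinarith [dist_nonneg (x := q) (y := z)]
  refine ⟨y.1, y.2, hy1, hy2, ?_⟩
  have hc1 : clamp16 L₁ y.1 = y.1 := clamp16_of_le hy1
  have hc2 : clamp16 L₂ y.2 = y.2 := clamp16_of_le hy2
  have hfix := hy.eq
  have e1 : y.1 = (ψ y.2).2 - (φ y.1).2 := by
    conv_lhs => rw [← hfix]
  have e2 : y.2 = (φ y.1).1 - (ψ y.2).1 := by
    conv_lhs => rw [← hfix]
  have hφy : φ y.1 = γ y.1 - y.1 • v₁ := by rw [hφ]; simp only []; rw [hc1]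
  have hψy : ψ y.2 = β y.2 - y.2 • v₂ := by rw [hψ]; simp only []; rw [hc2]
  rw [hφy, hψy] at e1 e2
  simp only [hv₁, hv₂, Prod.smul_mk, smul_eq_mul, mul_one, mul_zero, Prod.snd_sub, Prod.fst_sub] at e1 e2
  apply Prod.ext
  · simp at e2 ⊢
    linarith
  · simp at e1 ⊢
    linarith
/-- Hand-rolled Baire category lemma, localized: if a closed set `K` is covered by
countably many sets `A n`, and `z₀ ∈ K`, then some `A n ∩ K` is dense in some relatively
open portion of `K` centered within `r₀/2` of `z₀`. -/
lemma baire16 {K : Set (ℝ × ℝ)} (hK : IsClosed K) (A : ℕ → Set (ℝ × ℝ))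
    (hcover : K ⊆ ⋃ n, A n) {z₀ : ℝ × ℝ} (hz₀ : z₀ ∈ K) {r₀ : ℝ} (hr₀ : 0 < r₀) :
    ∃ n, ∃ z₁ ∈ K, ∃ ρ₁ > (0:ℝ), dist z₁ z₀ < r₀ / 2 ∧
      ball z₁ ρ₁ ∩ K ⊆ closure (A n ∩ K) := by
  by_contra hcon
  push_neg at hcon
  -- hcon : ∀ n, ∀ z ∈ K, ∀ ρ > 0, dist z z₀ < r₀/2 → ¬ (ball z ρ ∩ K ⊆ closure (A n ∩ K))
  have step : ∀ n : ℕ, ∀ x : ℝ × ℝ, ∀ ρ : ℝ, ∃ x' : ℝ × ℝ, ∃ ρ' : ℝ,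
      (x ∈ K ∧ 0 < ρ ∧ dist x z₀ ≤ r₀/2 - 2*ρ) →
      (x' ∈ K ∧ 0 < ρ' ∧ ρ' ≤ ρ/2 ∧ dist x' z₀ ≤ r₀/2 - 2*ρ' ∧
        closedBall x' ρ' ⊆ ball x ρ ∧ ball x' (2*ρ') ∩ (A n ∩ K) = ∅) := by
    intro n x ρ
    by_cases hx : x ∈ K ∧ 0 < ρ ∧ dist x z₀ ≤ r₀/2 - 2*ρ
    · obtain ⟨hxK, hρ, hxd⟩ := hx
      have hxd' : dist x z₀ < r₀/2 := by linarith
      have := hcon n x hxK ρ hρ hxd'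
      rw [not_subset] at this
      obtain ⟨w, ⟨hwball, hwK⟩, hwnc⟩ := this
      have : ∃ ε > (0:ℝ), ball w ε ∩ (A n ∩ K) = ∅ := by
        by_contra hc
        push_neg at hc
        apply hwnc
        rw [Metric.mem_closure_iff]
        intro ε hε
        obtain ⟨y, hy⟩ := hc ε hε
        exact ⟨y, hy.2, by rw [dist_comm]; exact mem_ball.1 hy.1⟩
      obtain ⟨ε, hε, hεball⟩ := this
      refine ⟨w, min (ε/4) (min (ρ/4) ((ρ - dist w x)/4)), fun _ => ?_⟩
      have hwx : dist w x < ρ := mem_ball.1 hwball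
      have hρ'pos : 0 < min (ε/4) (min (ρ/4) ((ρ - dist w x)/4)) := by
        have := dist_nonneg (x := w) (y := x)
        refine lt_min (by linarith) (lt_min (by linarith) (by linarith))
      set ρ' := min (ε/4) (min (ρ/4) ((ρ - dist w x)/4)) with hρ'
      have h1 : ρ' ≤ ε/4 := min_le_left _ _
      have h2 : ρ' ≤ ρ/4 := le_trans (min_le_right _ _) (min_le_left _ _)
      have h3 : ρ' ≤ (ρ - dist w x)/4 := le_trans (min_le_right _ _) (min_le_right _ _)
      refine ⟨hwK, hρ'pos, by linarith, ?_, ?_, ?_⟩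
      · have : dist w z₀ ≤ dist w x + dist x z₀ := dist_triangle _ _ _
        linarith
      · intro y hy
        rw [mem_closedBall] at hy
        rw [mem_ball]
        calc dist y x ≤ dist y w + dist w x := dist_triangle _ _ _
          _ ≤ ρ' + dist w x := by linarith
          _ < ρ := by linarith
      · rw [eq_empty_iff_forall_notMem]
        intro y hy
        have hyb : dist y w < 2*ρ' := mem_ball.1 hy.1
        have hmem : y ∈ ball w ε := mem_ball.2 (by linarith)
        have : y ∈ ball w ε ∩ (A n ∩ K) := ⟨hmem, hy.2⟩
        rw [hεball] at this
        exact this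
    · exact ⟨x, 1, fun h => absurd h hx⟩
  choose fx fρ hstep using step
  -- build the sequence
  set g : ℕ → (ℝ × ℝ) × ℝ := fun n => Nat.rec (z₀, r₀/8) (fun n p => (fx n p.1 p.2, fρ n p.1 p.2)) n with hg
  have hg0 : g 0 = (z₀, r₀/8) := rfl
  have hgsucc : ∀ n, g (n+1) = (fx n (g n).1 (g n).2, fρ n (g n).1 (g n).2) := fun n => rfl
  have hinv : ∀ n, (g n).1 ∈ K ∧ 0 < (g n).2 ∧ dist (g n).1 z₀ ≤ r₀/2 - 2*(g n).2 := by
    intro n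
    induction n with
    | zero => exact ⟨hz₀, by rw [hg0]; positivity, by rw [hg0]; simp; linarith⟩
    | succ n ih =>
      have := hstep n (g n).1 (g n).2 ih
      rw [hgsucc n]
      exact ⟨this.1, this.2.1, this.2.2.2.1⟩
  have hprop : ∀ n, (g (n+1)).2 ≤ (g n).2/2 ∧ closedBall (g (n+1)).1 (g (n+1)).2 ⊆ ball (g n).1 (g n).2 ∧
      ball (g (n+1)).1 (2*(g (n+1)).2) ∩ (A n ∩ K) = ∅ := by
    intro n
    have := hstep n (g n).1 (g n).2 (hinv n)
    rw [hgsucc n]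
    exact ⟨this.2.2.1, this.2.2.2.2.1, this.2.2.2.2.2⟩
  -- radii bound
  have hrad : ∀ n, (g n).2 ≤ (r₀/8) * (1/2)^n := by
    intro n
    induction n with
    | zero => simp [hg0]
    | succ n ih =>
      have := (hprop n).1
      calc (g (n+1)).2 ≤ (g n).2 / 2 := this
        _ ≤ ((r₀/8) * (1/2)^n)/2 := by linarith
        _ = (r₀/8) * (1/2)^(n+1) := by ring
  -- Cauchy
  have hcauchy : CauchySeq (fun n => (g n).1) := by
    apply cauchySeq_of_le_geometric (1/2) (r₀/8)
    · norm_num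
    · intro n
      have h1 : (g (n+1)).1 ∈ closedBall (g (n+1)).1 (g (n+1)).2 :=
        mem_closedBall_self (hinv (n+1)).2.1.le
      have h2 := (hprop n).2.1 h1
      rw [mem_ball] at h2
      calc dist (g n).1 (g (n+1)).1 = dist (g (n+1)).1 (g n).1 := dist_comm _ _
        _ ≤ (g n).2 := h2.le
        _ ≤ (r₀/8) * (1/2)^n := hrad n
  obtain ⟨xs, hxs⟩ := cauchySeq_tendsto_of_complete hcauchy
  -- nested closed balls
  have hnest : ∀ n m, n ≤ m → closedBall (g m).1 (g m).2 ⊆ closedBall (g n).1 (g n).2 := by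
    intro n m hnm
    induction m with
    | zero =>
      have : n = 0 := Nat.le_zero.1 hnm
      subst this; exact subset_rfl
    | succ m ih =>
      rcases Nat.lt_or_ge n (m+1) with h | h
      · have hnm' : n ≤ m := Nat.lt_succ_iff.1 h
        calc closedBall (g (m+1)).1 (g (m+1)).2 ⊆ ball (g m).1 (g m).2 := (hprop m).2.1
          _ ⊆ closedBall (g m).1 (g m).2 := ball_subset_closedBall
          _ ⊆ closedBall (g n).1 (g n).2 := ih hnm'
      · have : n = m + 1 := le_antisymm hnm h
        subst this; exact subset_rfl
  have hmem : ∀ n, xs ∈ closedBall (g n).1 (g n).2 := by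
    intro n
    apply isClosed_closedBall.mem_of_tendsto hxs
    filter_upwards [Filter.eventually_ge_atTop n] with m hm
    exact hnest n m hm (mem_closedBall_self (hinv m).2.1.le)
  have hxsK : xs ∈ K := hK.mem_of_tendsto hxs
    (Filter.Eventually.of_forall (fun n => (hinv n).1))
  obtain ⟨_, ⟨n, rfl⟩, hxsA⟩ := hcover hxsK
  have h1 : xs ∈ ball (g (n+1)).1 (2*(g (n+1)).2) := by
    have := hmem (n+1)
    rw [mem_closedBall] at this
    rw [mem_ball]
    have := (hinv (n+1)).2.1
    linarith
  have : xs ∈ ball (g (n+1)).1 (2*(g (n+1)).2) ∩ (A n ∩ K) := ⟨h1, hxsA, hxsK⟩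
  rw [(hprop n).2.2] at this
  exact this

/-- From a tangent vector, extract a uniformly cone-controlled germ. -/
lemma germ16 {L : Set (ℝ × ℝ)} {x v : ℝ × ℝ} (h : v ∈ tangentSet16 L x) :
    ∃ γ : ℝ → ℝ × ℝ, ∃ a : ℝ, 0 < a ∧ Differentiable ℝ γ ∧ γ 0 = x ∧
      (∀ s : ℝ, |s| ≤ a → γ s ∈ L ∧ ‖deriv γ s - v‖ ≤ 1/10) := by
  obtain ⟨γ, hsm, h0, hev, hder⟩ := h
  have hdiff : Differentiable ℝ γ := hsm.differentiable (by simp)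
  have hcont : Continuous (deriv γ) := hsm.continuous_deriv (by exact_mod_cast le_top)
  have h1 : ∀ᶠ s in nhds (0:ℝ), ‖deriv γ s - v‖ ≤ 1/10 := by
    have hc : ContinuousAt (fun s => ‖deriv γ s - v‖) 0 :=
      (hcont.continuousAt.sub continuousAt_const).norm
    have htend : Filter.Tendsto (fun s => ‖deriv γ s - v‖) (nhds 0) (nhds 0) := by
      have h0' : ‖deriv γ 0 - v‖ = 0 := by rw [hder]; simp
      have := hc
      unfold ContinuousAt at this
      simp only [] at this
      rwa [h0'] at this
    have := htend.eventually_le_const (by norm_num : (0:ℝ) < 1/10)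
    filter_upwards [this] with s hs using hs
  obtain ⟨a, ha, hball⟩ := Metric.eventually_nhds_iff.1 (hev.and h1)
  refine ⟨γ, a/2, by linarith, hdiff, h0, fun s hs => hball ?_⟩
  rw [Real.dist_eq, sub_zero]
  calc |s| ≤ a/2 := hs
    _ < a := by linarith

/-- From a tangent vector, points of `L` in the direction `v` at small scales. -/
lemma point16 {L : Set (ℝ × ℝ)} {x v : ℝ × ℝ} (h : v ∈ tangentSet16 L x)
    (ε : ℝ) (hε : 0 < ε) :
    ∃ t : ℝ, 0 < t ∧ t ≤ ε ∧ ∃ w ∈ L, ‖w - x - t • v‖ ≤ t * (1/2) := by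
  obtain ⟨γ, hsm, h0, hev, hder⟩ := h
  have hdiff : DifferentiableAt ℝ γ 0 := (hsm.differentiable (by simp)) 0
  have hd : HasDerivAt γ v 0 := by
    have := hdiff.hasDerivAt
    rwa [hder] at this
  rw [hasDerivAt_iff_tendsto_slope] at hd
  have h2 : ∀ᶠ t in nhdsWithin (0:ℝ) {(0:ℝ)}ᶜ, ‖slope γ 0 t - v‖ ≤ 1/2 := by
    have htend : Filter.Tendsto (fun t => ‖slope γ 0 t - v‖) (nhdsWithin (0:ℝ) {(0:ℝ)}ᶜ)
        (nhds ‖v - v‖) := (hd.sub tendsto_const_nhds).norm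
    simp only [sub_self, norm_zero] at htend
    have := htend.eventually_le_const (by norm_num : (0:ℝ) < 1/2)
    filter_upwards [this] with s hs using hs
  have h3 : ∀ᶠ t in nhdsWithin (0:ℝ) {(0:ℝ)}ᶜ, γ t ∈ L :=
    nhdsWithin_le_nhds hev
  have h4 := h2.and h3
  rw [eventually_nhdsWithin_iff] at h4
  obtain ⟨δ, hδ, hball⟩ := Metric.eventually_nhds_iff.1 h4
  set t := min (δ/2) ε with ht
  have ht0 : 0 < t := lt_min (by linarith) hε
  have htδ : |t| < δ := by
    rw [abs_of_pos ht0]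
    calc t ≤ δ/2 := min_le_left _ _
      _ < δ := by linarith
  have := hball (by rw [Real.dist_eq, sub_zero]; exact htδ) (by
    simp only [mem_compl_iff, mem_singleton_iff]
    exact ne_of_gt ht0)
  refine ⟨t, ht0, min_le_right _ _, γ t, this.2, ?_⟩
  have h5 : ‖slope γ 0 t - v‖ ≤ 1/2 := this.1
  have h6 : slope γ 0 t = t⁻¹ • (γ t - x) := by
    rw [slope_def_module, h0, sub_zero]
  rw [h6] at h5
  have h7 : γ t - x - t • v = t • (t⁻¹ • (γ t - x) - v) := by
    rw [smul_sub, smul_inv_smul₀ (ne_of_gt ht0)]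
  rw [h7, norm_smul, Real.norm_eq_abs, abs_of_pos ht0]
  calc t * ‖t⁻¹ • (γ t - x) - v‖ ≤ t * (1/2) := by
        apply mul_le_mul_of_nonneg_left h5 ht0.le
    _ ≤ t * (1/2) := le_refl _

set_option maxHeartbeats 1000000 in
theorem part2_16 :
    ¬ ∃ ℒ : Set (Set (ℝ × ℝ)), Setoid.IsPartition ℒ ∧
      ∀ L ∈ ℒ, IsConnected L ∧ ∀ p ∈ L, tangentSet16 L p = (D16 p : Set (ℝ × ℝ)) := by
  rintro ⟨ℒ, ⟨hne, hex⟩, hleaf⟩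
  have hex' : ∀ a : ℝ × ℝ, ∃ B, (B ∈ ℒ ∧ a ∈ B) ∧ ∀ C, (C ∈ ℒ ∧ a ∈ C) → C = B := hex
  choose leaf hleafP hleafU using hex'
  have hLmem : ∀ a, leaf a ∈ ℒ := fun a => (hleafP a).1
  have hamem : ∀ a, a ∈ leaf a := fun a => (hleafP a).2
  have htrans : ∀ a b, b ∈ leaf a → leaf b = leaf a := fun a b hb =>
    (hleafU b (leaf a) ⟨hLmem a, hb⟩).symm
  have htan : ∀ a, tangentSet16 (leaf a) a = (D16 a : Set (ℝ × ℝ)) :=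
    fun a => (hleaf (leaf a) (hLmem a)).2 a (hamem a)
  have htanH : ∀ a : ℝ × ℝ, 0 < a.1 → ∀ v : ℝ × ℝ, v ∈ tangentSet16 (leaf a) a := by
    intro a ha v
    rw [htan a]
    simp [D16, if_pos ha]
  set v₁ : ℝ × ℝ := ((0:ℝ),(1:ℝ)) with hv₁def
  set v₂ : ℝ × ℝ := ((1:ℝ),(0:ℝ)) with hv₂def
  -- uniform-germ classes
  set A : ℕ → Set (ℝ × ℝ) := fun n => {q | ∃ δ β : ℝ → ℝ × ℝ,
    Differentiable ℝ δ ∧ Differentiable ℝ β ∧ δ 0 = q ∧ β 0 = q ∧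
    ∀ s : ℝ, |s| ≤ 1/((n:ℝ)+1) →
      (δ s ∈ leaf q ∧ ‖deriv δ s - v₁‖ ≤ 1/10) ∧
      (β s ∈ leaf q ∧ ‖deriv β s - v₂‖ ≤ 1/10)} with hA
  have hcoverH : ∀ q : ℝ × ℝ, 0 < q.1 → ∃ n : ℕ, q ∈ A n := by
    intro q hq
    obtain ⟨δ, a, ha, hδd, hδ0, hδ⟩ := germ16 (htanH q hq v₁)
    obtain ⟨β, b, hb, hβd, hβ0, hβ⟩ := germ16 (htanH q hq v₂)
    have hmin : 0 < min a b := lt_min ha hb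
    obtain ⟨n, hn⟩ := exists_nat_gt (1 / min a b)
    have hn0 : (0:ℝ) < n := lt_trans (by positivity) hn
    have h1n : 1/((n:ℝ)+1) ≤ min a b := by
      rw [div_le_iff₀ (by positivity)]
      rw [div_lt_iff₀ hmin] at hn
      nlinarith
    refine ⟨n, δ, β, hδd, hβd, hδ0, hβ0, fun s hs => ?_⟩
    have hsa : |s| ≤ a := le_trans (le_trans hs h1n) (min_le_left _ _)
    have hsb : |s| ≤ b := le_trans (le_trans hs h1n) (min_le_right _ _)
    exact ⟨hδ s hsa, hβ s hsb⟩
  -- crossing two class-style germs identifies leaves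
  have cross_leaf : ∀ (q z : ℝ × ℝ) (Lq Lz : ℝ) (δ β : ℝ → ℝ × ℝ), 0 < Lq → 0 < Lz →
      Differentiable ℝ δ → Differentiable ℝ β → δ 0 = q → β 0 = z →
      (∀ s : ℝ, |s| ≤ Lq → δ s ∈ leaf q ∧ ‖deriv δ s - v₁‖ ≤ 1/10) →
      (∀ t : ℝ, |t| ≤ Lz → β t ∈ leaf z ∧ ‖deriv β t - v₂‖ ≤ 1/10) →
      dist q z ≤ min Lq Lz / 2 → leaf q = leaf z := by
    intro q z Lq Lz δ β hLq hLz hδd hβd hδ0 hβ0 hδ hβ hqz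
    obtain ⟨s, t, hs, ht, heq⟩ := cross16 hLq hLz hδd hβd hδ0 hβ0
      (fun s hs => (hδ s hs).2) (fun t ht => (hβ t ht).2) hqz
    calc leaf q = leaf (δ s) := (htrans q (δ s) (hδ s hs).1).symm
      _ = leaf (β t) := by rw [heq]
      _ = leaf z := htrans z (β t) (hβ t ht).1
  -- the local monochromaticity set
  set Gset : Set (ℝ × ℝ) := {x | ∃ ε : ℝ, 0 < ε ∧ ∀ y : ℝ × ℝ, dist y x < ε → leaf y = leaf x}
    with hGdef
  have hGopen : IsOpen Gset := by
    rw [Metric.isOpen_iff]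
    rintro x ⟨ε, hε, hmono⟩
    refine ⟨ε/2, by linarith, ?_⟩
    intro y hy
    rw [mem_ball] at hy
    have hyx : leaf y = leaf x := hmono y (by linarith)
    refine ⟨ε/2, by linarith, fun u hu => ?_⟩
    have hd : dist u x < ε := by
      have := dist_triangle u y x
      linarith
    rw [hmono u hd, hyx]
  -- STEP (i): every point of the right half plane is in Gset
  have hHG : ∀ z : ℝ × ℝ, 0 < z.1 → z ∈ Gset := by
    intro z₀ hz₀1
    by_contra hz₀G
    set r₀ : ℝ := min z₀.1 1 / 4 with hr₀def
    have hminpos : 0 < min z₀.1 1 := lt_min hz₀1 one_pos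
    have hr₀ : 0 < r₀ := by rw [hr₀def]; linarith
    have hr₀z : 4 * r₀ ≤ z₀.1 := by
      rw [hr₀def]
      have := min_le_left z₀.1 1
      linarith
    have hKH : ∀ y : ℝ × ℝ, y ∈ closedBall z₀ r₀ → 3*r₀ ≤ y.1 := by
      intro y hy
      have h1 : |y.1 - z₀.1| ≤ dist y z₀ := by
        rw [Prod.dist_eq]
        have h2 : dist y.1 z₀.1 = |y.1 - z₀.1| := Real.dist_eq _ _
        rw [← h2]
        exact le_max_left _ _
      rw [mem_closedBall] at hy
      have := (abs_le.1 (le_trans h1 hy)).1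
      linarith
    have hKHpos : ∀ y : ℝ × ℝ, y ∈ closedBall z₀ r₀ → 0 < y.1 :=
      fun y hy => lt_of_lt_of_le (by linarith) (hKH y hy)
    set K : Set (ℝ × ℝ) := closedBall z₀ r₀ ∩ Gsetᶜ with hKdef
    have hKclosed : IsClosed K := isClosed_closedBall.inter (isClosed_compl_iff.2 hGopen)
    have hKcover : K ⊆ ⋃ n, A n := by
      intro q hq
      obtain ⟨n, hn⟩ := hcoverH q (hKHpos q hq.1)
      exact mem_iUnion.2 ⟨n, hn⟩
    have hz₀K : z₀ ∈ K := ⟨mem_closedBall_self hr₀.le, hz₀G⟩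
    obtain ⟨n₁, z₁, hz₁K, ρ₁, hρ₁, hz₁d, hdense⟩ := baire16 hKclosed A hKcover hz₀K hr₀
    set L : ℝ := 1/((n₁:ℝ)+1) with hLdef
    have hL : 0 < L := by rw [hLdef]; positivity
    set ρ₂ : ℝ := min (min (ρ₁/4) (L/100)) (r₀/4) with hρ₂def
    have hρ₂ : 0 < ρ₂ := lt_min (lt_min (by linarith) (by linarith)) (by linarith)
    have hρ₂ρ₁ : ρ₂ ≤ ρ₁/4 := le_trans (min_le_left _ _) (min_le_left _ _)
    have hρ₂L : ρ₂ ≤ L/100 := le_trans (min_le_left _ _) (min_le_right _ _)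
    have hρ₂r : ρ₂ ≤ r₀/4 := min_le_right _ _
    have hnear : ∀ z, z ∈ K → dist z z₁ < ρ₁ → ∀ ε, 0 < ε →
        ∃ q, q ∈ A n₁ ∧ q ∈ K ∧ dist z q < ε := by
      intro z hz hd ε hε
      have hzc : z ∈ closure (A n₁ ∩ K) := hdense ⟨mem_ball.2 hd, hz⟩
      rw [Metric.mem_closure_iff] at hzc
      obtain ⟨q, hq, hqd⟩ := hzc ε hε
      exact ⟨q, hq.1, hq.2, hqd⟩
    have step1 : ∀ z, z ∈ K → dist z z₁ < ρ₂ →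
        ∃ q, q ∈ A n₁ ∧ q ∈ K ∧ dist z q < ρ₂ ∧ leaf q = leaf z := by
      intro z hz hd
      have hzH : 0 < z.1 := hKHpos z hz.1
      obtain ⟨β, b, hb, hβd, hβ0, hβ⟩ := germ16 (htanH z hzH v₂)
      have hεpos : 0 < min (min L b / 2) ρ₂ := by
        have : 0 < min L b := lt_min hL hb
        exact lt_min (by linarith) hρ₂
      obtain ⟨q, hqA, hqK, hqd⟩ := hnear z hz (lt_of_lt_of_le hd (by linarith)) _ hεpos
      have hqA' := hqA
      obtain ⟨δq, βq, hδqd, hβqd, hδq0, hβq0, hq'⟩ := hqA'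
      have hdqz : dist q z ≤ min L b / 2 := by
        rw [dist_comm]
        exact le_trans hqd.le (min_le_left _ _)
      have hcross := cross_leaf q z L b δq β hL hb hδqd hβd hδq0 hβ0
        (fun s hs => (hq' s hs).1) (fun t ht => hβ t ht) hdqz
      exact ⟨q, hqA, hqK, lt_of_lt_of_le hqd (min_le_right _ _), hcross⟩
    have habsorbK : ∀ z, z ∈ K → dist z z₁ < ρ₂ → leaf z = leaf z₁ := by
      have hz₁self : dist z₁ z₁ < ρ₂ := by simpa using hρ₂
      obtain ⟨q₁, hq₁A, hq₁K, hq₁d, hq₁leaf⟩ := step1 z₁ hz₁K hz₁self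
      intro z hz hd
      obtain ⟨qz, hqzA, hqzK, hqzd, hqzleaf⟩ := step1 z hz hd
      obtain ⟨δ, β, hδd, hβd, hδ0, hβ0, hq'⟩ := hqzA
      obtain ⟨δ', β', hδ'd, hβ'd, hδ'0, hβ'0, hq''⟩ := hq₁A
      have hdist : dist qz q₁ ≤ min L L / 2 := by
        have h1 := dist_triangle4 qz z z₁ q₁
        have h2 : dist qz z = dist z qz := dist_comm _ _
        have h3 : dist z₁ q₁ = dist z₁ q₁ := rfl
        rw [h2] at h1
        rw [min_self]
        linarith [hqzd, hd, hq₁d, hρ₂L, h1]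
      have := cross_leaf qz q₁ L L δ β' hL hL hδd hβ'd hδ0 hβ'0
        (fun s hs => (hq' s hs).1) (fun t ht => (hq'' t ht).2) hdist
      rw [hqzleaf, hq₁leaf] at this
      exact this
    set ρ₃ : ℝ := ρ₂/8 with hρ₃def
    have hρ₃ : 0 < ρ₃ := by rw [hρ₃def]; linarith
    have habsorbAll : ∀ x, dist x z₁ < ρ₃ → leaf x = leaf z₁ := by
      intro x hx
      have hxball : x ∈ closedBall z₀ r₀ := by
        rw [mem_closedBall]
        have h1 := dist_triangle x z₁ z₀
        have h2 : dist z₁ z₀ < r₀/2 := hz₁d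
        have h3 : ρ₃ ≤ r₀/32 := by rw [hρ₃def]; linarith
        linarith
      have hxH : 0 < x.1 := hKHpos x hxball
      by_cases hxG : x ∈ Gset
      swap
      · exact habsorbK x ⟨hxball, hxG⟩ (lt_of_lt_of_le hx (by rw [hρ₃def]; linarith))
      · obtain ⟨ε, hε, hmono⟩ := hxG
        set S : Set ℝ := {r | 0 < r ∧ r ≤ ρ₃ ∧ ∀ y, dist y x < r → leaf y = leaf x} with hSdef
        have hSmem : min ε ρ₃ ∈ S := ⟨lt_min hε hρ₃, min_le_right _ _,
          fun y hy => hmono y (lt_of_lt_of_le hy (min_le_left _ _))⟩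
        have hSne : S.Nonempty := ⟨_, hSmem⟩
        have hSbdd : BddAbove S := ⟨ρ₃, fun r hr => hr.2.1⟩
        set R : ℝ := sSup S with hRdef
        have hR0 : 0 < R := lt_of_lt_of_le (lt_min hε hρ₃) (le_csSup hSbdd hSmem)
        have hRρ₃ : R ≤ ρ₃ := csSup_le hSne (fun r hr => hr.2.1)
        have hRmono : ∀ y, dist y x < R → leaf y = leaf x := by
          intro y hy
          obtain ⟨r, hrS, hyr⟩ := exists_lt_of_lt_csSup hSne hy
          exact hrS.2.2 y hyr
        by_cases hcase : dist z₁ x < R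
        · exact (hRmono z₁ hcase).symm
        · push_neg at hcase
          have hRρ₃' : R < ρ₃ := lt_of_le_of_lt hcase (by rw [dist_comm]; exact hx)
          have hyk : ∀ k : ℕ, ∃ yy, dist yy x < R + (ρ₃ - R)/((k:ℝ)+1) ∧ leaf yy ≠ leaf x := by
            intro k
            have hpos : (0:ℝ) < (ρ₃ - R)/((k:ℝ)+1) := by
              apply div_pos (by linarith)
              positivity
            by_contra hcon
            push_neg at hcon
            have hr'2 : R + (ρ₃ - R)/((k:ℝ)+1) ≤ ρ₃ := by
              have h1 : (ρ₃ - R)/((k:ℝ)+1) ≤ ρ₃ - R := by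
                apply div_le_self (by linarith)
                have : (0:ℝ) ≤ (k:ℝ) := Nat.cast_nonneg k
                linarith
              linarith
            have hmem : R + (ρ₃ - R)/((k:ℝ)+1) ∈ S := ⟨by linarith, hr'2, hcon⟩
            have := le_csSup hSbdd hmem
            linarith
          choose yy hyy1 hyy2 using hyk
          have hyyball : ∀ k, yy k ∈ closedBall x ρ₃ := by
            intro k
            rw [mem_closedBall]
            have h1 : (ρ₃ - R)/((k:ℝ)+1) ≤ ρ₃ - R := by
              apply div_le_self (by linarith)
              have : (0:ℝ) ≤ (k:ℝ) := Nat.cast_nonneg k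
              linarith
            have := hyy1 k
            linarith
          obtain ⟨w, hwball, φ, hφ, hφtend⟩ := (isCompact_closedBall x ρ₃).tendsto_subseq hyyball
          have hge : ∀ k, R ≤ dist (yy k) x := by
            intro k
            by_contra hlt
            push_neg at hlt
            exact hyy2 k (hRmono _ hlt)
          have htd : Tendsto (fun k => dist (yy (φ k)) x) atTop (nhds (dist w x)) :=
            hφtend.dist tendsto_const_nhds
          have hφk : ∀ k : ℕ, (k:ℝ) ≤ (φ k : ℝ) := fun k => by exact_mod_cast hφ.le_apply
          have hupper : ∀ k, dist (yy (φ k)) x ≤ R + (ρ₃ - R)/((k:ℝ)+1) := by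
            intro k
            have h1 := (hyy1 (φ k)).le
            have h2 : (ρ₃ - R)/((φ k:ℝ)+1) ≤ (ρ₃ - R)/((k:ℝ)+1) := by
              apply div_le_div_of_nonneg_left (by linarith) (by positivity)
              linarith [hφk k]
            linarith
          have hwx : dist w x = R := by
            apply le_antisymm
            · have h2 : Tendsto (fun k : ℕ => R + (ρ₃ - R)/((k:ℝ)+1)) atTop (nhds (R + 0)) := by
                apply Tendsto.const_add
                have h3 : Tendsto (fun k : ℕ => (ρ₃ - R) * (1/((k:ℝ)+1))) atTop
                    (nhds ((ρ₃ - R) * 0)) :=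
                  Tendsto.const_mul _ tendsto_one_div_add_atTop_nhds_zero_nat
                simpa [div_eq_mul_inv, one_div] using h3
              rw [add_zero] at h2
              exact le_of_tendsto_of_tendsto' htd h2 hupper
            · exact ge_of_tendsto htd (Filter.Eventually.of_forall (fun k => hge (φ k)))
          have hwG : w ∉ Gset := by
            rintro ⟨εw, hεw, hwmono⟩
            set τ : ℝ := min (εw/(2*R)) (1/2) with hτdef
            have hτ0 : 0 < τ := lt_min (by positivity) (by norm_num)
            have hτ1 : τ ≤ 1/2 := min_le_right _ _
            set u : ℝ × ℝ := x + (1 - τ) • (w - x) with hudef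
            have hwxnorm : ‖w - x‖ = R := by rw [← dist_eq_norm]; exact hwx
            have hu1 : dist u w = τ * R := by
              rw [dist_eq_norm]
              have he : u - w = (-τ) • (w - x) := by
                rw [hudef, sub_smul, one_smul, neg_smul]
                abel
              rw [he, norm_smul, Real.norm_eq_abs, abs_neg, abs_of_pos hτ0, hwxnorm]
            have hu2 : dist u x = (1-τ) * R := by
              rw [dist_eq_norm]
              have he : u - x = (1-τ) • (w - x) := by rw [hudef]; abel
              rw [he, norm_smul, Real.norm_eq_abs, abs_of_pos (by linarith), hwxnorm]
            have hul1 : leaf u = leaf x := by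
              apply hRmono
              rw [hu2]
              nlinarith
            have hul2 : leaf u = leaf w := by
              apply hwmono
              rw [hu1]
              have h1 : τ ≤ εw/(2*R) := min_le_left _ _
              have h2 : τ * R ≤ (εw/(2*R)) * R := by nlinarith
              have h3 : (εw/(2*R)) * R = εw/2 := by field_simp
              linarith
            have hwlx : leaf w = leaf x := by rw [← hul2, hul1]
            have hev : ∀ᶠ k in atTop, dist (yy (φ k)) w < εw :=
              (Metric.tendsto_nhds.1 hφtend) εw hεw
            obtain ⟨k, hk⟩ := hev.exists
            exact hyy2 (φ k) (by rw [hwmono _ hk, hwlx])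
          have hwball' : w ∈ closedBall z₀ r₀ := by
            rw [mem_closedBall]
            have h1 := dist_triangle4 w x z₁ z₀
            have h2 : dist z₁ z₀ < r₀/2 := hz₁d
            have h3 : dist x z₁ < ρ₃ := hx
            have h4 : ρ₃ ≤ r₀/32 := by rw [hρ₃def]; linarith
            linarith [hwx, hRρ₃]
          have hwzd : dist w z₁ < ρ₂ := by
            have h1 := dist_triangle w x z₁
            have h2 : ρ₃ ≤ ρ₂/8 := le_of_eq hρ₃def
            linarith [hwx, hRρ₃, hx]
          have hwleaf : leaf w = leaf z₁ := habsorbK w ⟨hwball', hwG⟩ hwzd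
          have hwH : 0 < w.1 := hKHpos w hwball'
          set vv : ℝ × ℝ := R⁻¹ • (x - w) with hvvdef
          obtain ⟨t, ht0, htR, u, huL, hu⟩ := point16 (htanH w hwH vv) R hR0
          have hwxnorm : ‖w - x‖ = R := by rw [← dist_eq_norm]; exact hwx
          have hkey : dist u x < R := by
            have h1 : w + t • vv - x = (1 - t/R) • (w - x) := by
              rw [hvvdef, smul_smul]
              have ht' : t * R⁻¹ = t/R := (div_eq_mul_inv t R).symm
              rw [ht']
              module
            have h2 : ‖w + t • vv - x‖ = (1 - t/R) * R := by
              rw [h1, norm_smul, Real.norm_eq_abs, hwxnorm]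
              rw [abs_of_nonneg]
              have : t/R ≤ 1 := by
                rw [div_le_one hR0]
                exact htR
              linarith
            rw [dist_eq_norm]
            have h3 : u - x = (u - w - t • vv) + (w + t • vv - x) := by abel
            calc ‖u - x‖ ≤ ‖u - w - t • vv‖ + ‖w + t • vv - x‖ := by
                  rw [h3]; exact norm_add_le _ _
              _ ≤ t*(1/2) + (1 - t/R)*R := add_le_add hu (le_of_eq h2)
              _ = R - t/2 := by field_simp; ring
              _ < R := by linarith
          have hux : leaf u = leaf x := hRmono u hkey
          have huw : leaf u = leaf w := htrans w u huL
          rw [← hux, huw, hwleaf]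
    have hz₁G : z₁ ∈ Gset := ⟨ρ₃, hρ₃, fun y hy => habsorbAll y hy⟩
    exact hz₁K.2 hz₁G
  -- STEP (ii): the right half plane lies in a single leaf
  have hHconst : ∀ x y : ℝ × ℝ, 0 < x.1 → 0 < y.1 → leaf x = leaf y := by
    intro x y hx hy
    by_contra hneq
    set Hset : Set (ℝ × ℝ) := {p | 0 < p.1} with hHdef
    have hconv : Convex ℝ Hset := by
      intro p hp q hq a b ha hb hab
      simp only [hHdef, Set.mem_setOf_eq] at hp hq ⊢
      have he : (a • p + b • q).1 = a * p.1 + b * q.1 := rfl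
      rw [he]
      rcases eq_or_lt_of_le ha with h | h
      · have hb1 : b = 1 := by rw [← h] at hab; linarith
        rw [← h, hb1]
        simpa using hq
      · nlinarith [mul_pos h hp, mul_nonneg hb hq.le]
    have hpre : IsPreconnected Hset := hconv.isPreconnected
    -- choose radii
    have hball : ∀ z : ℝ × ℝ, 0 < z.1 → ∃ ε : ℝ, 0 < ε ∧ ∀ u, dist u z < ε → leaf u = leaf z :=
      fun z hz => (hHG z hz)
    choose eps heps hmono using hball
    set O₁ : Set (ℝ × ℝ) := ⋃ (z : ℝ × ℝ) (h : 0 < z.1 ∧ leaf z = leaf x), ball z (eps z h.1)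
      with hO₁
    set O₂ : Set (ℝ × ℝ) := ⋃ (z : ℝ × ℝ) (h : 0 < z.1 ∧ leaf z ≠ leaf x), ball z (eps z h.1)
      with hO₂
    have hO₁open : IsOpen O₁ := isOpen_iUnion (fun z => isOpen_iUnion (fun h => isOpen_ball))
    have hO₂open : IsOpen O₂ := isOpen_iUnion (fun z => isOpen_iUnion (fun h => isOpen_ball))
    have hsub : Hset ⊆ O₁ ∪ O₂ := by
      intro p hp
      by_cases hpx : leaf p = leaf x
      · left
        exact mem_iUnion.2 ⟨p, mem_iUnion.2 ⟨⟨hp, hpx⟩, mem_ball_self (heps p hp)⟩⟩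
      · right
        exact mem_iUnion.2 ⟨p, mem_iUnion.2 ⟨⟨hp, hpx⟩, mem_ball_self (heps p hp)⟩⟩
    have hO₁leaf : ∀ u ∈ O₁, leaf u = leaf x := by
      intro u hu
      obtain ⟨_, ⟨z, rfl⟩, hu2⟩ := hu
      obtain ⟨_, ⟨h, rfl⟩, hu3⟩ := hu2
      rw [hmono z h.1 u (mem_ball.1 hu3), h.2]
    have hO₂leaf : ∀ u ∈ O₂, leaf u ≠ leaf x := by
      intro u hu
      obtain ⟨_, ⟨z, rfl⟩, hu2⟩ := hu
      obtain ⟨_, ⟨h, rfl⟩, hu3⟩ := hu2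
      rw [hmono z h.1 u (mem_ball.1 hu3)]
      exact h.2
    have hnon : (Hset ∩ (O₁ ∩ O₂)).Nonempty := by
      apply hpre O₁ O₂ hO₁open hO₂open hsub
      · exact ⟨x, hx, mem_iUnion.2 ⟨x, mem_iUnion.2 ⟨⟨hx, rfl⟩, mem_ball_self (heps x hx)⟩⟩⟩
      · exact ⟨y, hy, mem_iUnion.2 ⟨y, mem_iUnion.2 ⟨⟨hy, Ne.symm hneq⟩,
          mem_ball_self (heps y hy)⟩⟩⟩
    obtain ⟨u, _, hu₁, hu₂⟩ := hnon
    exact hO₂leaf u hu₂ (hO₁leaf u hu₁)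
  -- STEP (iii): final contradiction at the origin
  set z₀ : ℝ × ℝ := ((0:ℝ),(0:ℝ)) with hz₀def
  have hz₀1 : ¬ (0:ℝ) < z₀.1 := by norm_num
  have hz₀tan : ((1:ℝ),(0:ℝ)) ∈ tangentSet16 (leaf z₀) z₀ := by
    rw [htan]
    show _ ∈ (D16 z₀ : Set (ℝ × ℝ))
    rw [D16, if_neg hz₀1]
    exact Submodule.mem_span_singleton.2 ⟨1, one_smul _ _⟩
  obtain ⟨t₀, ht₀0, ht₀1, w, hwL, hw⟩ := point16 hz₀tan 1 one_pos
  have hwH : 0 < w.1 := by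
    have h1 : |(w - z₀ - t₀ • ((1:ℝ),(0:ℝ))).1| ≤ ‖w - z₀ - t₀ • ((1:ℝ),(0:ℝ))‖ := by
      rw [Prod.norm_def]
      exact le_max_left _ _
    have h2 : (w - z₀ - t₀ • ((1:ℝ),(0:ℝ))).1 = w.1 - t₀ := by
      simp [hz₀def]
    rw [h2] at h1
    have := le_trans h1 hw
    rw [abs_le] at this
    have := this.1
    linarith
  have hwleaf : leaf w = leaf z₀ := htrans z₀ w hwL
  set η : ℝ → ℝ × ℝ := fun t => (t^2, t) with hηdef
  have hηtan : ((0:ℝ),(1:ℝ)) ∈ tangentSet16 (leaf z₀) z₀ := by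
    refine ⟨η, ?_, ?_, ?_, ?_⟩
    · exact (contDiff_id.pow 2).prodMk contDiff_id
    · simp [hηdef, hz₀def]
    · apply Filter.Eventually.of_forall
      intro t
      by_cases ht : t = 0
      · subst ht
        have : η 0 = z₀ := by simp [hηdef, hz₀def]
        rw [this]
        exact hamem z₀
      · have htH : 0 < (η t).1 := by
          simp only [hηdef]
          exact lt_of_le_of_ne (sq_nonneg t) (Ne.symm (pow_ne_zero 2 ht))
        have h1 : leaf (η t) = leaf w := hHconst (η t) w htH hwH
        rw [← hwleaf, ← h1]
        exact hamem (η t)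
    · have h1 : HasDerivAt (fun t : ℝ => t^2) 0 0 := by
        have := hasDerivAt_pow 2 (0:ℝ)
        simpa using this
      have h2 : HasDerivAt (fun t : ℝ => t) 1 0 := hasDerivAt_id 0
      exact (h1.prodMk h2).deriv
  rw [htan] at hηtan
  have : ((0:ℝ),(1:ℝ)) ∈ (D16 z₀ : Set (ℝ × ℝ)) := hηtan
  rw [D16, if_neg hz₀1] at this
  have := mem_span10.1 this
  norm_num at this


/-- The distribution `D16` (full plane for `x > 0`, the `∂/∂x`-line for `x ≤ 0`) is
involutive — the bracket of any two smooth vector fields valued in it is again valued in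
it — but it is not integrable: there is no partition of `ℝ²` into connected immersed
leaves whose tangent spaces equal `D16` at every point. -/
theorem stmt16 :
    (∀ X Y : ℝ × ℝ → ℝ × ℝ, ContDiff ℝ (⊤ : ℕ∞) X → ContDiff ℝ (⊤ : ℕ∞) Y →
      (∀ p, X p ∈ D16 p) → (∀ p, Y p ∈ D16 p) →
      ∀ p, vbracket16 X Y p ∈ D16 p) ∧
    ¬ ∃ ℒ : Set (Set (ℝ × ℝ)), Setoid.IsPartition ℒ ∧
      ∀ L ∈ ℒ, IsConnected L ∧ ∀ p ∈ L, tangentSet16 L p = (D16 p : Set (ℝ × ℝ)) := by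
  constructor
  · intro X Y hX hY hXD hYD p
    exact part1_16 X Y hX hY hXD hYD p
  · exact part2_16
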